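/- arXiv:1002.2011 — 2 statements merged into one kernel-verified Lean document; each statement's English description precedes it below -/
import Mathlib

section
/- Let d > 0, γ > 0, c > 0, and s ∈ ℝ with 0 < s < d. For bounded measurable m : [0,∞) → ℂ with |m| ≤ 1, define L(r) = ∫₀^∞ m(t) t^{s/(d+1)} e^{-c(r^{d+1}/t)^γ} e^{-t} dt/t for r > 0. Then there is a constant C, depending only on d, γ, c, s, such that |L(r)| ≤ C (r^{s-d} + r^{γ(s-d)/(γ+1)}) exp(-C⁻¹ r^{γ(d+1)/(γ+1)}) for all r > 0. -/
open MeasureTheory Set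

set_option maxHeartbeats 2000000 in
theorem kernel_estimate_s_lt_d (d γ c s : ℝ) (hd : 0 < d) (hγ : 0 < γ) (hc : 0 < c)
    (hs : 0 < s) (hsd : s < d) (m : ℝ → ℂ) (hm : Measurable m) (hmb : ∀ t, ‖m t‖ ≤ 1) :
    ∃ C : ℝ, 0 < C ∧ ∀ r : ℝ, 0 < r →
      ‖∫ t in Set.Ioi (0 : ℝ),
          m t * ((t ^ (s / (d + 1)) * Real.exp (-c * (r ^ (d + 1) / t) ^ γ) *
            Real.exp (-t) / t : ℝ) : ℂ)‖ ≤
        C * (r ^ (s - d) + r ^ (γ * (s - d) / (γ + 1))) *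
          Real.exp (-C⁻¹ * r ^ (γ * (d + 1) / (γ + 1))) := by
  have hd1 : (0:ℝ) < d + 1 := by linarith
  have hγ1 : (0:ℝ) < γ + 1 := by linarith
  have hα : 0 < s / (d + 1) := div_pos hs hd1
  set β : ℝ := γ * (d + 1) / (γ + 1) with hβdef
  have hβ0 : 0 < β := by positivity
  set w₁ : ℝ := 1 / (γ + 1) with hw₁def
  set w₂ : ℝ := γ / (γ + 1) with hw₂def
  have hw₁ : 0 < w₁ := by positivity
  have hw₂ : 0 < w₂ := by positivity
  have hw : w₁ + w₂ = 1 := by rw [hw₁def, hw₂def]; field_simp; ring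
  set κ : ℝ := c ^ w₁ / 2 ^ w₂ with hκdef
  have hκ : 0 < κ := div_pos (Real.rpow_pos_of_pos hc _) (Real.rpow_pos_of_pos two_pos _)
  -- key pointwise exponent bound
  have key : ∀ r : ℝ, 0 < r → ∀ t : ℝ, 0 < t →
      κ * r ^ β ≤ c * (r ^ (d + 1) / t) ^ γ + t / 2 := by
    intro r hr t ht
    set X : ℝ := r ^ (d + 1) / t with hXdef
    have hX : 0 < X := div_pos (Real.rpow_pos_of_pos hr _) ht
    have hp₁ : (0:ℝ) ≤ c * X ^ γ := by positivity
    have hp₂ : (0:ℝ) ≤ t / 2 := by linarith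
    have amgm := Real.geom_mean_le_arith_mean2_weighted hw₁.le hw₂.le hp₁ hp₂ hw
    have heq : (c * X ^ γ) ^ w₁ * (t / 2) ^ w₂ = κ * r ^ β := by
      have e1 : (c * X ^ γ) ^ w₁ = c ^ w₁ * X ^ w₂ := by
        rw [Real.mul_rpow hc.le (Real.rpow_nonneg hX.le γ), ← Real.rpow_mul hX.le]
        congr 1
        rw [hw₁def, hw₂def]; ring
      have e2 : (t / 2) ^ w₂ = t ^ w₂ / 2 ^ w₂ := Real.div_rpow ht.le (by norm_num) _
      have e3 : X ^ w₂ * t ^ w₂ = r ^ β := by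
        rw [← Real.mul_rpow hX.le ht.le, hXdef, div_mul_cancel₀ _ (ne_of_gt ht),
          ← Real.rpow_mul hr.le]
        congr 1
        rw [hw₂def, hβdef]; ring
      rw [e1, e2, hκdef]
      field_simp
      rw [← e3]
    calc κ * r ^ β = (c * X ^ γ) ^ w₁ * (t / 2) ^ w₂ := heq.symm
      _ ≤ w₁ * (c * X ^ γ) + w₂ * (t / 2) := amgm
      _ ≤ c * X ^ γ + t / 2 := by
          have h1 : w₁ ≤ 1 := by linarith
          have h2 : w₂ ≤ 1 := by linarith
          nlinarith [mul_nonneg (sub_nonneg.2 h1) hp₁, mul_nonneg (sub_nonneg.2 h2) hp₂]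
  -- integrable dominating function
  have hint : IntegrableOn (fun t : ℝ => t ^ (s / (d + 1) - 1) * Real.exp (-(2⁻¹) * t))
      (Ioi 0) := by
    have := integrableOn_rpow_mul_exp_neg_mul_rpow (p := 1) (s := s / (d + 1) - 1)
      (b := 2⁻¹) (by linarith) one_pos (by norm_num)
    simpa [Real.rpow_one] using this
  set G : ℝ := ∫ t in Ioi (0:ℝ), t ^ (s / (d + 1) - 1) * Real.exp (-(2⁻¹) * t) with hGdef
  have hG0 : 0 ≤ G :=
    setIntegral_nonneg measurableSet_Ioi fun t ht =>
      mul_nonneg (Real.rpow_nonneg (le_of_lt ht) _) (Real.exp_nonneg _)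
  -- main integral bound
  have main : ∀ r : ℝ, 0 < r →
      ‖∫ t in Set.Ioi (0 : ℝ),
          m t * ((t ^ (s / (d + 1)) * Real.exp (-c * (r ^ (d + 1) / t) ^ γ) *
            Real.exp (-t) / t : ℝ) : ℂ)‖ ≤ Real.exp (-(κ * r ^ β)) * G := by
    intro r hr
    have hbound : ∀ᵐ t ∂(volume.restrict (Ioi (0:ℝ))),
        ‖m t * ((t ^ (s / (d + 1)) * Real.exp (-c * (r ^ (d + 1) / t) ^ γ) *
            Real.exp (-t) / t : ℝ) : ℂ)‖ ≤
          Real.exp (-(κ * r ^ β)) * (t ^ (s / (d + 1) - 1) * Real.exp (-(2⁻¹) * t)) := by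
      rw [ae_restrict_iff' measurableSet_Ioi]
      refine ae_of_all _ fun t ht => ?_
      have ht : (0:ℝ) < t := ht
      set v : ℝ := t ^ (s / (d + 1)) * Real.exp (-c * (r ^ (d + 1) / t) ^ γ) *
          Real.exp (-t) / t with hvdef
      have hv0 : 0 ≤ v := by rw [hvdef]; positivity
      have h1 : ‖m t * (v : ℂ)‖ ≤ v := by
        rw [norm_mul, Complex.norm_real, Real.norm_eq_abs, abs_of_nonneg hv0]
        calc ‖m t‖ * v ≤ 1 * v := mul_le_mul_of_nonneg_right (hmb t) hv0
          _ = v := one_mul v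
      refine h1.trans ?_
      have hv : v = t ^ (s / (d + 1) - 1) *
          Real.exp (-(c * (r ^ (d + 1) / t) ^ γ + t)) := by
        rw [hvdef, Real.rpow_sub ht, Real.rpow_one, neg_add, Real.exp_add, neg_mul]
        ring
      rw [hv]
      have hexp : Real.exp (-(c * (r ^ (d + 1) / t) ^ γ + t)) ≤
          Real.exp (-(κ * r ^ β)) * Real.exp (-(2⁻¹) * t) := by
        rw [← Real.exp_add]
        apply Real.exp_le_exp.2
        have := key r hr t ht
        linarith
      calc t ^ (s / (d + 1) - 1) * Real.exp (-(c * (r ^ (d + 1) / t) ^ γ + t))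
          ≤ t ^ (s / (d + 1) - 1) * (Real.exp (-(κ * r ^ β)) * Real.exp (-(2⁻¹) * t)) :=
            mul_le_mul_of_nonneg_left hexp (Real.rpow_nonneg ht.le _)
        _ = Real.exp (-(κ * r ^ β)) * (t ^ (s / (d + 1) - 1) * Real.exp (-(2⁻¹) * t)) := by
            ring
    have := norm_integral_le_of_norm_le (hint.const_mul (Real.exp (-(κ * r ^ β)))) hbound
    refine this.trans ?_
    rw [integral_const_mul]
  refine ⟨max (max 1 (Real.exp 1 * G)) (2 / κ + G * (2 / κ)),
    lt_of_lt_of_le one_pos ((le_max_left 1 _).trans (le_max_left _ _)), fun r hr => ?_⟩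
  set C : ℝ := max (max 1 (Real.exp 1 * G)) (2 / κ + G * (2 / κ)) with hCdef
  have hC1 : (1:ℝ) ≤ C := (le_max_left 1 _).trans (le_max_left _ _)
  have hC0 : (0:ℝ) < C := lt_of_lt_of_le one_pos hC1
  have hCeG : Real.exp 1 * G ≤ C := (le_max_right _ _).trans (le_max_left _ _)
  have hCκ : 2 / κ ≤ C :=
    (le_add_of_nonneg_right (by positivity)).trans (le_max_right _ _)
  have hCGκ : G * (2 / κ) ≤ C :=
    (le_add_of_nonneg_left (by positivity)).trans (le_max_right _ _)
  have hCinv : C⁻¹ ≤ κ / 2 := by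
    have h := inv_anti₀ (div_pos two_pos hκ) hCκ
    rwa [inv_div] at h
  refine le_trans (main r hr) ?_
  by_cases hr1 : r ≤ 1
  · -- small r
    have hrb1 : r ^ β ≤ 1 := Real.rpow_le_one hr.le hr1 hβ0.le
    have hrb0 : (0:ℝ) ≤ r ^ β := Real.rpow_nonneg hr.le _
    have hA : Real.exp (-(κ * r ^ β)) * G ≤ G := by
      have he1 : Real.exp (-(κ * r ^ β)) ≤ 1 :=
        Real.exp_le_one_iff.2 (neg_nonpos.2 (by positivity))
      nlinarith [Real.exp_nonneg (-(κ * r ^ β))]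
    refine hA.trans ?_
    have h1 : (1:ℝ) ≤ r ^ (s - d) :=
      Real.one_le_rpow_of_pos_of_le_one_of_nonpos hr hr1 (by linarith)
    have h2 : (0:ℝ) ≤ r ^ (γ * (s - d) / (γ + 1)) := Real.rpow_nonneg hr.le _
    have h3 : Real.exp (-1) ≤ Real.exp (-C⁻¹ * r ^ β) := by
      apply Real.exp_le_exp.2
      have hCi : (0:ℝ) < C⁻¹ := inv_pos.2 hC0
      have h4 : C⁻¹ * r ^ β ≤ 1 := by
        calc C⁻¹ * r ^ β ≤ 1 * 1 :=
              mul_le_mul (inv_le_one_of_one_le₀ hC1) hrb1 hrb0 zero_le_one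
          _ = 1 := one_mul 1
      linarith
    have he : Real.exp 1 * Real.exp (-1) = 1 := by
      rw [← Real.exp_add]; norm_num
    calc G = Real.exp 1 * G * Real.exp (-1) := by
          rw [mul_comm (Real.exp 1) G, mul_assoc, he, mul_one]
      _ ≤ C * (r ^ (s - d) + r ^ (γ * (s - d) / (γ + 1))) * Real.exp (-C⁻¹ * r ^ β) := by
          apply mul_le_mul ?_ h3 (Real.exp_nonneg _) (by positivity)
          calc Real.exp 1 * G ≤ C := hCeG
            _ = C * 1 := (mul_one C).symm
            _ ≤ C * (r ^ (s - d) + r ^ (γ * (s - d) / (γ + 1))) := by nlinarith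
  · -- large r
    push_neg at hr1
    set u : ℝ := r ^ β with hudef
    have hu1 : (1:ℝ) ≤ u := Real.one_le_rpow hr1.le hβ0.le
    have hu0 : (0:ℝ) < u := lt_of_lt_of_le one_pos hu1
    set q : ℝ := (d - s) / (d + 1) with hqdef
    have hq0 : 0 < q := div_pos (by linarith) hd1
    have hq1 : q ≤ 1 := by rw [hqdef, div_le_one hd1]; linarith
    have hT : r ^ (γ * (s - d) / (γ + 1)) = u ^ (-q) := by
      rw [hudef, ← Real.rpow_mul hr.le]
      congr 1
      rw [hβdef, hqdef, show -((d - s) / (d + 1)) = (s - d) / (d + 1) from by ring,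
        div_mul_div_comm,
        show γ * (d + 1) * (s - d) = γ * (s - d) * (d + 1) from by ring,
        mul_div_mul_right _ _ (ne_of_gt hd1)]
    have huq : u ^ q * u ^ (-q) = 1 := by
      rw [← Real.rpow_add hu0]; simp
    have h1 : G * u ^ q ≤ C * Real.exp ((κ - C⁻¹) * u) := by
      have ha : u ^ q ≤ u := by
        calc u ^ q ≤ u ^ (1:ℝ) := Real.rpow_le_rpow_of_exponent_le hu1 hq1
          _ = u := Real.rpow_one u
      have hb : u ≤ 2 / κ * Real.exp (κ / 2 * u) := by
        rw [div_mul_eq_mul_div, le_div_iff₀ hκ]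
        nlinarith [Real.add_one_le_exp (κ / 2 * u), hu0.le]
      calc G * u ^ q ≤ G * u := mul_le_mul_of_nonneg_left ha hG0
        _ ≤ G * (2 / κ * Real.exp (κ / 2 * u)) := mul_le_mul_of_nonneg_left hb hG0
        _ = G * (2 / κ) * Real.exp (κ / 2 * u) := by ring
        _ ≤ C * Real.exp (κ / 2 * u) :=
            mul_le_mul_of_nonneg_right hCGκ (Real.exp_nonneg _)
        _ ≤ C * Real.exp ((κ - C⁻¹) * u) := by
            apply mul_le_mul_of_nonneg_left ?_ hC0.le
            apply Real.exp_le_exp.2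
            nlinarith [hu0.le]
    have h2 : Real.exp (-(κ * u)) * G ≤ C * u ^ (-q) * Real.exp (-C⁻¹ * u) := by
      have hmul := mul_le_mul_of_nonneg_right h1
        (mul_nonneg (Real.rpow_nonneg hu0.le (-q)) (Real.exp_nonneg (-(κ * u))))
      calc Real.exp (-(κ * u)) * G
          = G * u ^ q * (u ^ (-q) * Real.exp (-(κ * u))) := by
            rw [show G * u ^ q * (u ^ (-q) * Real.exp (-(κ * u)))
                = G * (u ^ q * u ^ (-q)) * Real.exp (-(κ * u)) from by ring, huq]
            ring
        _ ≤ C * Real.exp ((κ - C⁻¹) * u) * (u ^ (-q) * Real.exp (-(κ * u))) := hmul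
        _ = C * u ^ (-q) * (Real.exp ((κ - C⁻¹) * u) * Real.exp (-(κ * u))) := by ring
        _ = C * u ^ (-q) * Real.exp (-C⁻¹ * u) := by
            rw [← Real.exp_add]; congr 1; ring
    refine h2.trans ?_
    rw [hT]
    have hle : u ^ (-q) ≤ r ^ (s - d) + u ^ (-q) :=
      le_add_of_nonneg_left (Real.rpow_nonneg hr.le _)
    exact mul_le_mul_of_nonneg_right
      (mul_le_mul_of_nonneg_left hle hC0.le) (Real.exp_nonneg _)
end

section
/- Let d > 0, γ > 0, c > 0. For s = d and bounded measurable m with |m| ≤ 1, the function L(r) = ∫₀^∞ m(t) t^{d/(d+1)} e^{-c(r^{d+1}/t)^γ} e^{-t} dt/t satisfies |L(r)| ≤ C (1 + |log r|) exp(-C⁻¹ r^{γ(d+1)/(γ+1)}) for all r ∈ (0,1], and in particular |L(r)| ≤ C(1 - log r) for small r. -/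
open MeasureTheory Set

theorem kernel_estimate_s_eq_d (d γ c : ℝ) (hd : 0 < d) (hγ : 0 < γ) (hc : 0 < c)
    (m : ℝ → ℂ) (hm : Measurable m) (hmb : ∀ t, ‖m t‖ ≤ 1) :
    ∃ C : ℝ, 0 < C ∧
      (∀ r : ℝ, r ∈ Set.Ioc (0 : ℝ) 1 →
        ‖∫ t in Set.Ioi (0 : ℝ),
            m t * ((t ^ (d / (d + 1)) * Real.exp (-c * (r ^ (d + 1) / t) ^ γ) *
              Real.exp (-t) / t : ℝ) : ℂ)‖ ≤
          C * (1 + |Real.log r|) * Real.exp (-C⁻¹ * r ^ (γ * (d + 1) / (γ + 1)))) ∧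
      ∃ r₀ : ℝ, 0 < r₀ ∧ ∀ r : ℝ, r ∈ Set.Ioc (0 : ℝ) r₀ →
        ‖∫ t in Set.Ioi (0 : ℝ),
            m t * ((t ^ (d / (d + 1)) * Real.exp (-c * (r ^ (d + 1) / t) ^ γ) *
              Real.exp (-t) / t : ℝ) : ℂ)‖ ≤ C * (1 - Real.log r) := by
  have hd1 : (0:ℝ) < d + 1 := by linarith
  set p : ℝ := d / (d + 1) with hp
  have hp0 : 0 < p := div_pos hd hd1
  set A : ℝ := Real.Gamma p with hA
  have hApos : 0 < A := Real.Gamma_pos_of_pos hp0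
  have hint : IntegrableOn (fun t : ℝ => Real.exp (-t) * t ^ (p - 1)) (Ioi 0) :=
    Real.GammaIntegral_convergent hp0
  have hAeq : A = ∫ t in Ioi (0:ℝ), Real.exp (-t) * t ^ (p - 1) := by
    rw [hA, Real.Gamma_eq_integral hp0]
  have key : ∀ r : ℝ, 0 < r →
      ‖∫ t in Ioi (0:ℝ), m t * ((t ^ p * Real.exp (-c * (r ^ (d + 1) / t) ^ γ) *
          Real.exp (-t) / t : ℝ) : ℂ)‖ ≤ A := by
    intro r hr
    rw [hAeq]
    refine norm_integral_le_of_norm_le hint ?_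
    filter_upwards [ae_restrict_mem measurableSet_Ioi] with t ht
    simp only [mem_Ioi] at ht
    rw [norm_mul, Complex.norm_real]
    have hE : Real.exp (-c * (r ^ (d + 1) / t) ^ γ) ≤ 1 := by
      rw [Real.exp_le_one_iff]
      have hx : 0 ≤ (r ^ (d + 1) / t) ^ γ :=
        Real.rpow_nonneg (div_nonneg (Real.rpow_nonneg hr.le _) ht.le) _
      nlinarith
    have hEpos : 0 < Real.exp (-c * (r ^ (d + 1) / t) ^ γ) := Real.exp_pos _
    have htp : (0:ℝ) < t ^ p := Real.rpow_pos_of_pos ht _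
    have hnn : 0 ≤ t ^ p * Real.exp (-c * (r ^ (d + 1) / t) ^ γ) * Real.exp (-t) / t := by
      positivity
    rw [Real.norm_of_nonneg hnn]
    calc ‖m t‖ * (t ^ p * Real.exp (-c * (r ^ (d + 1) / t) ^ γ) * Real.exp (-t) / t)
        ≤ 1 * (t ^ p * 1 * Real.exp (-t) / t) := by
          gcongr
          exact hmb t
      _ = Real.exp (-t) * t ^ (p - 1) := by
          rw [Real.rpow_sub ht, Real.rpow_one]
          field_simp
  refine ⟨A + 1, by linarith, ?_, 1, one_pos, ?_⟩
  · intro r hr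
    obtain ⟨hr0, hr1⟩ := hr
    refine (key r hr0).trans ?_
    have hα : 0 ≤ γ * (d + 1) / (γ + 1) := by positivity
    have hrα : r ^ (γ * (d + 1) / (γ + 1)) ≤ 1 :=
      Real.rpow_le_one hr0.le hr1 hα
    have hinv : (0:ℝ) < (A + 1)⁻¹ := by positivity
    have h1 : Real.exp (-(A + 1)⁻¹) ≤ Real.exp (-(A + 1)⁻¹ * r ^ (γ * (d + 1) / (γ + 1))) := by
      apply Real.exp_le_exp.2
      nlinarith [Real.rpow_nonneg hr0.le (γ * (d + 1) / (γ + 1))]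
    have h2 : A ≤ (A + 1) * Real.exp (-(A + 1)⁻¹) := by
      have := Real.add_one_le_exp (-(A + 1)⁻¹)
      have hA1 : (0:ℝ) < A + 1 := by linarith
      have : (A + 1) * (1 - (A + 1)⁻¹) ≤ (A + 1) * Real.exp (-(A + 1)⁻¹) := by
        apply mul_le_mul_of_nonneg_left _ hA1.le
        linarith
      calc A = (A + 1) * (1 - (A + 1)⁻¹) := by field_simp; ring
        _ ≤ _ := this
    calc A ≤ (A + 1) * Real.exp (-(A + 1)⁻¹) := h2
      _ ≤ (A + 1) * 1 * Real.exp (-(A + 1)⁻¹ * r ^ (γ * (d + 1) / (γ + 1))) := by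
          rw [mul_one]; exact mul_le_mul_of_nonneg_left h1 (by linarith)
      _ ≤ (A + 1) * (1 + |Real.log r|) * Real.exp (-(A + 1)⁻¹ * r ^ (γ * (d + 1) / (γ + 1))) := by
          gcongr
          linarith [abs_nonneg (Real.log r)]
  · intro r hr
    obtain ⟨hr0, hr1⟩ := hr
    refine (key r hr0).trans ?_
    have hlog : Real.log r ≤ 0 := Real.log_nonpos hr0.le hr1
    nlinarith
end
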